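/- Let a, h ∈ ℙ¹(ℂ), let (A_j) be a sequence of Möbius transformations of ℙ¹(ℂ) that converges to the constant map with value a locally uniformly on ℙ¹(ℂ) ∖ {h}, and let (μ_j) be a sequence of Borel probability measures on ℙ¹(ℂ) such that μ_j → μ_C weakly and (A_j)_*μ_j → μ_E weakly for some Borel probability measures μ_C, μ_E on ℙ¹(ℂ). Then μ_E({a}) ≥ μ_C(ℙ¹(ℂ) ∖ {h}) = 1 − μ_C({h}); i.e., μ_C({h}) + μ_E({a}) ≥ 1. -/

import Mathlib

/-!
STATEMENT 5.
The Riemann sphere `ℙ¹(ℂ)` is formalized as the one-point compactification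
`OnePoint ℂ` with its standard (compact Hausdorff) topology and Borel
σ-algebra.  `mobiusMap α β γ δ` is the Möbius transformation
`z ↦ (αz+β)/(γz+δ)`.  Weak convergence of Borel probability measures is
tested against continuous real-valued functions.
-/

open scoped Classical OnePoint
open Filter MeasureTheory

noncomputable instance : MeasurableSpace (OnePoint ℂ) := borel _
instance : BorelSpace (OnePoint ℂ) := ⟨rfl⟩

/-- The Möbius transformation `z ↦ (αz+β)/(γz+δ)` of the Riemann sphere. -/
noncomputable def mobiusMap (α β γ δ : ℂ) : OnePoint ℂ → OnePoint ℂ :=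
  fun p =>
    Option.elim p
      (if γ = 0 then ∞ else ((α / γ : ℂ) : OnePoint ℂ))
      (fun z => if γ * z + δ = 0 then ∞
        else (((α * z + β) / (γ * z + δ) : ℂ) : OnePoint ℂ))

/-- `A` is a Möbius transformation of the Riemann sphere. -/
def IsMobius (A : OnePoint ℂ → OnePoint ℂ) : Prop :=
  ∃ α β γ δ : ℂ, α * δ - β * γ ≠ 0 ∧ A = mobiusMap α β γ δ

/-- Weak convergence of a sequence of measures on the Riemann sphere. -/
def WeakLim (μ : ℕ → Measure (OnePoint ℂ)) (ν : Measure (OnePoint ℂ)) : Prop :=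
  ∀ φ : C(OnePoint ℂ, ℝ),
    Tendsto (fun j => ∫ x, φ x ∂(μ j)) atTop (nhds (∫ x, φ x ∂ν))

instance : SecondCountableTopology (OnePoint ℂ) := by
  obtain ⟨b, hbc, -, hb⟩ := TopologicalSpace.exists_countable_basis ℂ
  set S : Set (Set (OnePoint ℂ)) :=
    (fun U => ((↑) : ℂ → OnePoint ℂ) '' U) '' b ∪
      Set.range (fun n : ℕ => (((↑) : ℂ → OnePoint ℂ) '' Metric.closedBall 0 n)ᶜ) with hS
  have hSc : S.Countable := (hbc.image _).union (Set.countable_range _)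
  refine (TopologicalSpace.isTopologicalBasis_of_isOpen_of_nhds ?_ ?_).secondCountableTopology hSc
  · rintro s (⟨U, hU, rfl⟩ | ⟨n, rfl⟩)
    · exact OnePoint.isOpen_image_coe.2 (hb.isOpen hU)
    · exact OnePoint.isOpen_compl_image_coe.2 ⟨Metric.isClosed_closedBall, isCompact_closedBall 0 n⟩
  · intro x u hxu hu
    cases x with
    | infty =>
      have hinf : (∞ : OnePoint ℂ) ∈ u := hxu
      obtain ⟨-, hcpt⟩ := (OnePoint.isOpen_iff_of_mem hinf).1 hu
      obtain ⟨r, hr⟩ := hcpt.isBounded.subset_closedBall 0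
      obtain ⟨n, hn⟩ := exists_nat_ge r
      refine ⟨(((↑) : ℂ → OnePoint ℂ) '' Metric.closedBall 0 n)ᶜ, Or.inr ⟨n, rfl⟩,
        fun hmem => OnePoint.infty_notMem_image_coe hmem, ?_⟩
      rintro (_ | z) hy
      · exact hinf
      · have hz : z ∉ Metric.closedBall (0:ℂ) n := fun hz => hy (Set.mem_image_of_mem _ hz)
        by_contra hzu
        exact hz (Metric.closedBall_subset_closedBall hn (hr hzu))
    | coe z =>
      have hz : z ∈ ((↑) : ℂ → OnePoint ℂ) ⁻¹' u := hxu
      obtain ⟨U, hUb, hzU, hUsub⟩ := hb.exists_subset_of_mem_open hz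
        (hu.preimage OnePoint.continuous_coe)
      exact ⟨((↑) : ℂ → OnePoint ℂ) '' U, Or.inl ⟨U, hUb, rfl⟩, Set.mem_image_of_mem _ hzU,
        Set.image_subset_iff.2 hUsub⟩

lemma measurable_mobiusMap (α β γ δ : ℂ) : Measurable (mobiusMap α β γ δ) := by
  have hemb : MeasurableEmbedding ((↑) : ℂ → OnePoint ℂ) :=
    OnePoint.isOpenEmbedding_coe.measurableEmbedding
  have hg : Measurable (fun z : ℂ => mobiusMap α β γ δ (z : OnePoint ℂ)) := by
    have heq : (fun z : ℂ => mobiusMap α β γ δ (z : OnePoint ℂ)) =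
        fun z => if γ * z + δ = 0 then ∞
          else (((α * z + β) / (γ * z + δ) : ℂ) : OnePoint ℂ) := rfl
    rw [heq]
    refine Measurable.ite ?_ measurable_const
      (OnePoint.continuous_coe.measurable.comp (by fun_prop))
    exact measurableSet_eq_fun (by fun_prop) measurable_const
  intro S hS
  have key : mobiusMap α β γ δ ⁻¹' S =
      (((↑) : ℂ → OnePoint ℂ) '' ((fun z : ℂ => mobiusMap α β γ δ (z : OnePoint ℂ)) ⁻¹' S)) ∪
        ({(∞ : OnePoint ℂ)} ∩ mobiusMap α β γ δ ⁻¹' S) := by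
    ext p
    cases p with
    | infty => simp [OnePoint.infty_notMem_image_coe]
    | coe z =>
      simp only [Set.mem_union, Set.mem_inter_iff, Set.mem_singleton_iff, Set.mem_preimage,
        Set.mem_image]
      constructor
      · intro hp; exact Or.inl ⟨z, hp, rfl⟩
      · rintro (⟨w, hw, hwz⟩ | ⟨habs, -⟩)
        · rwa [← OnePoint.coe_injective hwz]
        · exact absurd habs (OnePoint.coe_ne_infty z)
  rw [key]
  refine (hemb.measurableSet_image.2 (hg hS)).union ?_
  by_cases hmem : (∞ : OnePoint ℂ) ∈ mobiusMap α β γ δ ⁻¹' S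
  · have : ({(∞ : OnePoint ℂ)} ∩ mobiusMap α β γ δ ⁻¹' S) = {(∞ : OnePoint ℂ)} := by
      ext p
      simp only [Set.mem_inter_iff, Set.mem_singleton_iff, Set.mem_preimage,
        and_iff_left_iff_imp]
      rintro rfl; exact hmem
    rw [this]; exact isClosed_singleton.measurableSet
  · have : ({(∞ : OnePoint ℂ)} ∩ mobiusMap α β γ δ ⁻¹' S) = ∅ := by
      ext p; simp only [Set.mem_inter_iff, Set.mem_singleton_iff, Set.mem_empty_iff_false,
        iff_false, not_and]
      rintro rfl; exact hmem
    rw [this]; exact MeasurableSet.empty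

theorem statement5
    (a h : OnePoint ℂ) (A : ℕ → OnePoint ℂ → OnePoint ℂ)
    (hA : ∀ j, IsMobius (A j))
    -- `A j → (const a)` locally uniformly on `ℙ¹(ℂ) ∖ {h}`:
    (hconv : ∀ U ∈ nhds a, ∀ K : Set (OnePoint ℂ), IsCompact K → K ⊆ {h}ᶜ →
      ∀ᶠ j in atTop, ∀ z ∈ K, A j z ∈ U)
    (μ : ℕ → Measure (OnePoint ℂ)) (hμ : ∀ j, IsProbabilityMeasure (μ j))
    (μC μE : Measure (OnePoint ℂ))
    (hμC : IsProbabilityMeasure μC) (hμE : IsProbabilityMeasure μE)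
    (hlimC : WeakLim μ μC)
    (hlimE : WeakLim (fun j => Measure.map (A j) (μ j)) μE) :
    μC {h}ᶜ ≤ μE {a} ∧ μC {h}ᶜ = 1 - μC {h} ∧ 1 ≤ μC {h} + μE {a} := by
  have hmA : ∀ j, Measurable (A j) := by
    intro j
    obtain ⟨α, β, γ, δ, -, hEq⟩ := hA j
    rw [hEq]; exact measurable_mobiusMap α β γ δ
  have hsing : ∀ x : OnePoint ℂ, MeasurableSet {x} := fun x => isClosed_singleton.measurableSet
  haveI hQprob : ∀ j, IsProbabilityMeasure (Measure.map (A j) (μ j)) :=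
    fun j => Measure.isProbabilityMeasure_map (hmA j).aemeasurable
  haveI : ∀ j, IsProbabilityMeasure (μ j) := hμ
  let P : ℕ → ProbabilityMeasure (OnePoint ℂ) := fun j => ⟨μ j, hμ j⟩
  let PC : ProbabilityMeasure (OnePoint ℂ) := ⟨μC, hμC⟩
  let Q : ℕ → ProbabilityMeasure (OnePoint ℂ) := fun j => ⟨Measure.map (A j) (μ j), hQprob j⟩
  let QE : ProbabilityMeasure (OnePoint ℂ) := ⟨μE, hμE⟩
  have hPC : Tendsto P atTop (nhds PC) :=
    ProbabilityMeasure.tendsto_iff_forall_integral_tendsto.2 fun f => hlimC f.toContinuousMap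
  have hQE : Tendsto Q atTop (nhds QE) :=
    ProbabilityMeasure.tendsto_iff_forall_integral_tendsto.2 fun f => hlimE f.toContinuousMap
  have hclosedE : ∀ F : Set (OnePoint ℂ), IsClosed F →
      (atTop.limsup fun j => Measure.map (A j) (μ j) F) ≤ μE F :=
    fun F hF => ProbabilityMeasure.limsup_measure_closed_le_of_tendsto hQE hF
  have hopenC : ∀ G : Set (OnePoint ℂ), IsOpen G →
      μC G ≤ atTop.liminf fun j => μ j G := by
    intro G hG
    refine le_measure_liminf_of_limsup_measure_compl_le (μ := μC) (μs := μ)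
      hG.measurableSet ?_
    exact ProbabilityMeasure.limsup_measure_closed_le_of_tendsto hPC
      (isClosed_compl_iff.2 hG)
  obtain ⟨Va, hVa⟩ := (nhds a).exists_antitone_basis
  obtain ⟨Vh, hVh⟩ := (nhds h).exists_antitone_basis
  have hVamem : ∀ m, Va m ∈ nhds a := fun m => hVa.toHasBasis.mem_of_mem trivial
  have hVhmem : ∀ n, Vh n ∈ nhds h := fun n => hVh.toHasBasis.mem_of_mem trivial
  set F : ℕ → Set (OnePoint ℂ) := fun m => closure (Va m) with hFdef
  set G : ℕ → Set (OnePoint ℂ) := fun n => (closure (Vh n))ᶜ with hGdef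
  have hFnhds : ∀ m, F m ∈ nhds a := fun m => Filter.mem_of_superset (hVamem m) subset_closure
  have hFclosed : ∀ m, IsClosed (F m) := fun m => isClosed_closure
  have hGopen : ∀ n, IsOpen (G n) := fun n => isClosed_closure.isOpen_compl
  have hKcompact : ∀ n, IsCompact (closure (G n)) := fun n => isClosed_closure.isCompact
  have hKsub : ∀ n, closure (G n) ⊆ {h}ᶜ := by
    intro n x hx
    simp only [Set.mem_compl_iff, Set.mem_singleton_iff]
    rintro rfl
    have hcl : closure (G n) ⊆ (interior (closure (Vh n)))ᶜ := by
      rw [hGdef]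
      simp only
      rw [closure_compl]
    exact hcl hx (mem_interior_iff_mem_nhds.2
      (Filter.mem_of_superset (hVhmem n) subset_closure))
  have key : ∀ n m, μC (G n) ≤ μE (F m) := by
    intro n m
    have hUm : interior (F m) ∈ nhds a :=
      isOpen_interior.mem_nhds (mem_interior_iff_mem_nhds.2 (hFnhds m))
    have hev := hconv _ hUm _ (hKcompact n) (hKsub n)
    have hev2 : ∀ᶠ j in atTop, μ j (G n) ≤ Measure.map (A j) (μ j) (F m) := by
      filter_upwards [hev] with j hj
      rw [Measure.map_apply (hmA j) (hFclosed m).measurableSet]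
      refine measure_mono fun x hx => ?_
      exact Set.mem_preimage.2 (interior_subset (hj x (subset_closure hx)))
    calc μC (G n) ≤ atTop.liminf (fun j => μ j (G n)) := hopenC _ (hGopen n)
      _ ≤ atTop.liminf (fun j => Measure.map (A j) (μ j) (F m)) := Filter.liminf_le_liminf hev2
      _ ≤ atTop.limsup (fun j => Measure.map (A j) (μ j) (F m)) := Filter.liminf_le_limsup
      _ ≤ μE (F m) := hclosedE _ (hFclosed m)
  have hGmono : Monotone G := fun i j hij =>
    Set.compl_subset_compl.2 (closure_mono (hVh.antitone hij))
  have hFanti : Antitone F := fun i j hij => closure_mono (hVa.antitone hij)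
  have hGunion : (⋃ n, G n) = {h}ᶜ := by
    ext x
    simp only [Set.mem_iUnion, Set.mem_compl_iff, Set.mem_singleton_iff]
    constructor
    · rintro ⟨n, hx⟩ rfl
      exact hx (subset_closure (mem_of_mem_nhds (hVhmem n)))
    · intro hxh
      obtain ⟨W, O, hWo, hOo, hxW, hhO, hdisj⟩ := t2_separation hxh
      obtain ⟨n, -, hsub⟩ := hVh.toHasBasis.mem_iff.mp (hOo.mem_nhds hhO)
      refine ⟨n, fun hx => ?_⟩
      have hcl : closure (Vh n) ⊆ Wᶜ :=
        closure_minimal (hsub.trans hdisj.subset_compl_left) hWo.isClosed_compl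
      exact hcl hx hxW
  have hFinter : (⋂ m, F m) = {a} := by
    ext x
    simp only [Set.mem_iInter, Set.mem_singleton_iff]
    constructor
    · intro hx
      by_contra hxa
      obtain ⟨W, O, hWo, hOo, hxW, haO, hdisj⟩ := t2_separation hxa
      obtain ⟨m, -, hsub⟩ := hVa.toHasBasis.mem_iff.mp (hOo.mem_nhds haO)
      have hcl : closure (Va m) ⊆ Wᶜ :=
        closure_minimal (hsub.trans hdisj.subset_compl_left) hWo.isClosed_compl
      exact hcl (hx m) hxW
    · rintro rfl m
      exact subset_closure (mem_of_mem_nhds (hVamem m))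
  have hlim1 : μC {h}ᶜ ≤ μE {a} := by
    have h1 : μC {h}ᶜ = ⨆ n, μC (G n) := by
      rw [← hGunion]; exact Directed.measure_iUnion hGmono.directed_le
    have h2 : μE {a} = ⨅ m, μE (F m) := by
      rw [← hFinter]
      exact Directed.measure_iInter (fun m => (hFclosed m).measurableSet.nullMeasurableSet)
        hFanti.directed_ge ⟨0, measure_ne_top _ _⟩
    rw [h1, h2]
    exact iSup_le fun n => le_iInf fun m => key n m
  refine ⟨hlim1, ?_, ?_⟩
  · rw [measure_compl (hsing h) (measure_ne_top _ _), measure_univ]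
  · have h3 : μC {h} + μC {h}ᶜ = 1 := by
      rw [measure_add_measure_compl (hsing h), measure_univ]
    calc (1:ENNReal) = μC {h} + μC {h}ᶜ := h3.symm
      _ ≤ μC {h} + μE {a} := add_le_add_right hlim1 _
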